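/- (Lemma 1, Hoeffding's inequality.) Let (Ω, ℙ) be a probability space, n ≥ 1, and let X₁,…,Xₙ : Ω → ℝ be independent random variables, each with the same expected value μ and almost surely bounded in a fixed interval [a, b] with a < b. Let X̄ₙ = (1/n) ∑_{i=1}^{n} Xᵢ be their empirical average. Then for any ε > 0: ℙ[|X̄ₙ − μ| ≥ ε] ≤ 2 · exp(−2 n ε² / (b − a)²). -/

import Mathlib

open Real

lemma hoeff_core (p : ℝ) (hp0 : 0 ≤ p) (hp1 : p ≤ 1) (t : ℝ) :
    Real.log (1 - p + p * Real.exp t) ≤ p * t + t ^ 2 / 8 := by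
  set d : ℝ → ℝ := fun t => 1 - p + p * Real.exp t with hd_def
  have hd : ∀ s : ℝ, 0 < d s := by
    intro s
    rcases lt_or_ge p 1 with h | h
    · have : 0 < 1 - p := by linarith
      have : 0 ≤ p * Real.exp s := mul_nonneg hp0 (exp_pos s).le
      simp only [hd_def]; linarith
    · have hp : p = 1 := le_antisymm hp1 h
      simp [hd_def, hp, exp_pos]
  set g : ℝ → ℝ := fun s => p * s + s ^ 2 / 8 - Real.log (d s) with hg_def
  set g1 : ℝ → ℝ := fun s => p + s / 4 - p * Real.exp s / d s with hg1_def
  have hdd : ∀ s : ℝ, HasDerivAt d (p * Real.exp s) s := by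
    intro s
    exact ((Real.hasDerivAt_exp s).const_mul p).const_add (1 - p)
  have hg : ∀ s : ℝ, HasDerivAt g (g1 s) s := by
    intro s
    have h1 : HasDerivAt (fun s : ℝ => p * s) p s := by
      simpa using (hasDerivAt_id s).const_mul p
    have h2 : HasDerivAt (fun s : ℝ => s ^ 2 / 8) (s / 4) s := by
      have := (hasDerivAt_pow 2 s).div_const 8
      refine this.congr_deriv ?_
      norm_num; ring
    have h3 : HasDerivAt (fun s => Real.log (d s)) (p * Real.exp s / d s) s :=
      (hdd s).log (hd s).ne'
    exact (h1.add h2).sub h3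
  have hg1 : ∀ s : ℝ, HasDerivAt g1 (1 / 4 - (p * Real.exp s * (1 - p)) / (d s) ^ 2) s := by
    intro s
    have h1 : HasDerivAt (fun s : ℝ => p + s / 4) (1 / 4) s := by
      simpa using ((hasDerivAt_id s).div_const 4).const_add p
    have h2 : HasDerivAt (fun s => p * Real.exp s / d s)
        ((p * Real.exp s * d s - p * Real.exp s * (p * Real.exp s)) / (d s) ^ 2) s :=
      ((Real.hasDerivAt_exp s).const_mul p).div (hdd s) (hd s).ne'
    have hnum : p * Real.exp s * d s - p * Real.exp s * (p * Real.exp s)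
        = p * Real.exp s * (1 - p) := by
      simp only [hd_def]; ring
    have := h1.sub h2
    rw [hnum] at this
    exact this
  have hg1nonneg : ∀ s : ℝ, 0 ≤ 1 / 4 - (p * Real.exp s * (1 - p)) / (d s) ^ 2 := by
    intro s
    have hds : d s = 1 - p + p * Real.exp s := rfl
    have hds2 : (0:ℝ) < (d s) ^ 2 := pow_pos (hd s) 2
    rw [sub_nonneg, div_le_iff₀ hds2, hds]
    nlinarith [sq_nonneg (1 - p - p * Real.exp s)]
  -- g1 is monotone
  have hg1mono : Monotone g1 := by
    apply monotone_of_deriv_nonneg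
    · exact fun s => (hg1 s).differentiableAt
    · intro s
      rw [(hg1 s).deriv]
      exact hg1nonneg s
  have hg10 : g1 0 = 0 := by
    simp [hg1_def, hd_def]
  have hg0 : g 0 = 0 := by
    simp [hg_def, hd_def]
  -- conclude g t ≥ 0
  have key : 0 ≤ g t := by
    rcases le_or_gt 0 t with h | h
    · have hmono : MonotoneOn g (Set.Ici 0) := by
        apply monotoneOn_of_deriv_nonneg (convex_Ici 0)
        · exact Continuous.continuousOn (by
            fun_prop (disch := intro s; exact (hd s).ne'))
        · intro s _
          exact (hg s).differentiableAt.differentiableWithinAt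
        · intro s hs
          have hs' : (0:ℝ) ≤ s := interior_subset hs
          rw [(hg s).deriv, ← hg10]
          exact hg1mono hs' 
      have := hmono (Set.self_mem_Ici) (Set.mem_Ici.mpr h) h
      linarith [hg0 ▸ this]
    · have hmono : AntitoneOn g (Set.Iic 0) := by
        apply antitoneOn_of_deriv_nonpos (convex_Iic 0)
        · exact Continuous.continuousOn (by
            fun_prop (disch := intro s; exact (hd s).ne'))
        · intro s _
          exact (hg s).differentiableAt.differentiableWithinAt
        · intro s hs
          have hs' : s ∈ Set.Iic (0:ℝ) := interior_subset hs
          rw [(hg s).deriv, ← hg10]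
          exact hg1mono (Set.mem_Iic.mp hs')
      have := hmono (Set.mem_Iic.mpr h.le) (Set.self_mem_Iic) h.le
      linarith [hg0 ▸ this]
  have : Real.log (d t) ≤ p * t + t ^ 2 / 8 := by
    simp only [hg_def] at key; linarith
  exact this

open MeasureTheory ProbabilityTheory
lemma hoeff_integrable {Ω : Type*} [MeasurableSpace Ω] (P : Measure Ω)
    [IsProbabilityMeasure P] {X : Ω → ℝ} (hX : Measurable X) {a b : ℝ}
    (hb : ∀ᵐ ω ∂P, X ω ∈ Set.Icc a b) (t : ℝ) :
    Integrable (fun ω => Real.exp (t * X ω)) P := by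
  refine (integrable_const (Real.exp (|t| * (|a| + |b|)))).mono'
    ((hX.const_mul t).exp.aestronglyMeasurable) ?_
  filter_upwards [hb] with ω hω
  rw [Real.norm_eq_abs, Real.abs_exp, Real.exp_le_exp]
  have h1 : |X ω| ≤ |a| + |b| := by
    rcases hω with ⟨h1, h2⟩
    rw [abs_le]; constructor <;> [skip; skip] <;> cases abs_cases a <;> cases abs_cases b <;> linarith
  calc t * X ω ≤ |t * X ω| := le_abs_self _
    _ = |t| * |X ω| := abs_mul _ _
    _ ≤ |t| * (|a| + |b|) := by
        exact mul_le_mul_of_nonneg_left h1 (abs_nonneg t)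

lemma hoeff_mgf {Ω : Type*} [MeasurableSpace Ω] (P : Measure Ω)
    [IsProbabilityMeasure P] {X : Ω → ℝ} (hX : Measurable X) {a b μ : ℝ} (hab : a < b)
    (hb : ∀ᵐ ω ∂P, X ω ∈ Set.Icc a b) (hmean : ∫ ω, X ω ∂P = μ) (t : ℝ) :
    mgf X P t ≤ Real.exp (t * μ + t ^ 2 * (b - a) ^ 2 / 8) := by
  have hba : (0:ℝ) < b - a := by linarith
  have hXint : Integrable X P := by
    refine (integrable_const (|a| + |b|)).mono' hX.aestronglyMeasurable ?_
    filter_upwards [hb] with ω hω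
    rcases hω with ⟨h1, h2⟩
    rw [Real.norm_eq_abs, abs_le]
    constructor <;> cases abs_cases a <;> cases abs_cases b <;> linarith
  have hμa : a ≤ μ := by
    rw [← hmean]
    have : ∫ _ω, a ∂P ≤ ∫ ω, X ω ∂P :=
      integral_mono_ae (integrable_const a) hXint (by filter_upwards [hb] with ω hω using hω.1)
    simpa using this
  have hμb : μ ≤ b := by
    rw [← hmean]
    have : ∫ ω, X ω ∂P ≤ ∫ _ω, b ∂P :=
      integral_mono_ae hXint (integrable_const b) (by filter_upwards [hb] with ω hω using hω.2)
    simpa using this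
  set p : ℝ := (μ - a) / (b - a) with hp_def
  have hp0 : 0 ≤ p := div_nonneg (by linarith) hba.le
  have hp1 : p ≤ 1 := by rw [div_le_one hba]; linarith
  -- pointwise convexity bound
  have hconv : ∀ x ∈ Set.Icc a b, Real.exp (t * x) ≤
      (b - x) / (b - a) * Real.exp (t * a) + (x - a) / (b - a) * Real.exp (t * b) := by
    intro x hx
    have hl0 : 0 ≤ (b - x) / (b - a) := div_nonneg (by linarith [hx.2]) hba.le
    have hl1 : 0 ≤ (x - a) / (b - a) := div_nonneg (by linarith [hx.1]) hba.le
    have hsum : (b - x) / (b - a) + (x - a) / (b - a) = 1 := by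
      field_simp; ring
    have := convexOn_exp.2 (Set.mem_univ (t * a)) (Set.mem_univ (t * b)) hl0 hl1 hsum
    have harg : (b - x) / (b - a) * (t * a) + (x - a) / (b - a) * (t * b) = t * x := by
      field_simp; ring
    rw [smul_eq_mul, smul_eq_mul, smul_eq_mul, smul_eq_mul, harg] at this
    exact this
  -- integrate
  have hint1 : Integrable (fun ω => Real.exp (t * X ω)) P := hoeff_integrable P hX hb t
  have step1 : mgf X P t ≤
      (b - μ) / (b - a) * Real.exp (t * a) + (μ - a) / (b - a) * Real.exp (t * b) := by
    have hRHS : Integrable (fun ω => (b - X ω) / (b - a) * Real.exp (t * a)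
        + (X ω - a) / (b - a) * Real.exp (t * b)) P := by
      apply Integrable.add
      · exact ((((integrable_const b).sub hXint).div_const (b - a)).mul_const _)
      · exact (((hXint.sub (integrable_const a)).div_const (b - a)).mul_const _)
    have hmono : mgf X P t ≤ ∫ ω, ((b - X ω) / (b - a) * Real.exp (t * a)
        + (X ω - a) / (b - a) * Real.exp (t * b)) ∂P := by
      refine integral_mono_ae hint1 hRHS ?_
      filter_upwards [hb] with ω hω using hconv _ hω
    refine hmono.trans_eq ?_
    have e1 : ∀ ω : Ω, (b - X ω) / (b - a) * Real.exp (t * a) + (X ω - a) / (b - a) * Real.exp (t * b)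
        = (Real.exp (t * a) / (b - a)) * (b - X ω) + (Real.exp (t * b) / (b - a)) * (X ω - a) := by
      intro ω; ring
    simp_rw [e1]
    have ib : Integrable (fun _ : Ω => b) P := integrable_const b
    have ia : Integrable (fun _ : Ω => a) P := integrable_const a
    have i1 : Integrable (fun ω => Real.exp (t * a) / (b - a) * (b - X ω)) P :=
      (ib.sub hXint).const_mul _
    have i2 : Integrable (fun ω => Real.exp (t * b) / (b - a) * (X ω - a)) P :=
      (hXint.sub ia).const_mul _
    rw [integral_add i1 i2, integral_const_mul, integral_const_mul,
      integral_sub ib hXint, integral_sub hXint ia,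
      hmean, integral_const, integral_const]
    simp only [measure_univ, probReal_univ, ENNReal.toReal_one, one_smul, smul_eq_mul, one_mul]
    ring
  -- algebra with hoeff_core
  have hkey : (b - μ) / (b - a) * Real.exp (t * a) + (μ - a) / (b - a) * Real.exp (t * b)
      ≤ Real.exp (t * μ + t ^ 2 * (b - a) ^ 2 / 8) := by
    have hexp : Real.exp (t * a) * Real.exp (t * (b - a)) = Real.exp (t * b) := by
      rw [← Real.exp_add]; ring_nf
    have h1p : (b - μ) / (b - a) = 1 - p := by
      rw [hp_def]; field_simp; ring
    have hform : (b - μ) / (b - a) * Real.exp (t * a) + (μ - a) / (b - a) * Real.exp (t * b)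
        = Real.exp (t * a) * (1 - p + p * Real.exp (t * (b - a))) := by
      rw [h1p, ← hp_def]
      linear_combination (-p) * hexp
    rw [hform]
    have hdpos : 0 < 1 - p + p * Real.exp (t * (b - a)) := by
      rcases lt_or_ge p 1 with h | h
      · nlinarith [Real.exp_pos (t * (b - a))]
      · have hp : p = 1 := le_antisymm hp1 h
        simp [hp, Real.exp_pos]
    have hcore := hoeff_core p hp0 hp1 (t * (b - a))
    have hdle : 1 - p + p * Real.exp (t * (b - a))
        ≤ Real.exp (p * (t * (b - a)) + (t * (b - a)) ^ 2 / 8) :=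
      (Real.log_le_iff_le_exp hdpos).mp hcore
    calc Real.exp (t * a) * (1 - p + p * Real.exp (t * (b - a)))
        ≤ Real.exp (t * a) * Real.exp (p * (t * (b - a)) + (t * (b - a)) ^ 2 / 8) :=
          mul_le_mul_of_nonneg_left hdle (Real.exp_pos _).le
      _ = Real.exp (t * μ + t ^ 2 * (b - a) ^ 2 / 8) := by
          rw [← Real.exp_add]
          congr 1
          rw [hp_def]
          field_simp
          ring
  exact step1.trans hkey

open MeasureTheory ProbabilityTheory Real in
/-- Lemma 1 (Hoeffding's inequality): for independent random variables `X₁, …, Xₙ`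
with common mean `μ`, each almost surely bounded in `[a, b]`, the probability that
the empirical average deviates from `μ` by at least `ε > 0` is at most
`2 · exp (−2 n ε² / (b − a)²)`. -/
theorem hoeffding_inequality {Ω : Type*} [MeasurableSpace Ω] (P : Measure Ω)
    [IsProbabilityMeasure P] (n : ℕ) (hn : 1 ≤ n) (X : Fin n → Ω → ℝ)
    (hmeas : ∀ i, Measurable (X i))
    (hindep : iIndepFun X P)
    (μ : ℝ) (hmean : ∀ i, ∫ ω, X i ω ∂P = μ)
    (a b : ℝ) (hab : a < b)
    (hbound : ∀ i, ∀ᵐ ω ∂P, X i ω ∈ Set.Icc a b)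
    (ε : ℝ) (hε : 0 < ε) :
    (P {ω | ε ≤ |(1 / n : ℝ) * ∑ i : Fin n, X i ω - μ|}).toReal ≤
      2 * Real.exp (-2 * n * ε ^ 2 / (b - a) ^ 2) := by
  have hba : (0:ℝ) < b - a := by linarith
  have hc : (0:ℝ) < (b - a) ^ 2 := by positivity
  have hnpos : (0:ℝ) < n := by exact_mod_cast hn
  set Y : Fin n → Ω → ℝ := fun i ω => X i ω - μ with hY_def
  have hYmeas : ∀ i, Measurable (Y i) := fun i => (hmeas i).sub_const μ
  have hYindep : iIndepFun Y P := by
    exact hindep.comp (fun i x => x - μ) (fun i => measurable_id.sub_const μ)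
  have hYbound : ∀ i, ∀ᵐ ω ∂P, Y i ω ∈ Set.Icc (a - μ) (b - μ) := by
    intro i
    filter_upwards [hbound i] with ω hω
    exact ⟨by simpa [hY_def] using sub_le_sub_right hω.1 μ,
           by simpa [hY_def] using sub_le_sub_right hω.2 μ⟩
  have hXiInt : ∀ i, Integrable (X i) P := by
    intro i
    refine (integrable_const (|a| + |b|)).mono' (hmeas i).aestronglyMeasurable ?_
    filter_upwards [hbound i] with ω hω
    rcases hω with ⟨h1, h2⟩
    rw [Real.norm_eq_abs, abs_le]
    constructor <;> cases abs_cases a <;> cases abs_cases b <;> linarith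
  have hYmean : ∀ i, ∫ ω, Y i ω ∂P = 0 := by
    intro i
    simp [hY_def, integral_sub (hXiInt i) (integrable_const μ), hmean i]
  have habY : a - μ < b - μ := by linarith
  -- mgf bound for the sum
  have hmgf_sum : ∀ t : ℝ, mgf (∑ i, Y i) P t ≤ Real.exp (n * (t ^ 2 * (b - a) ^ 2 / 8)) := by
    intro t
    rw [hYindep.mgf_sum hYmeas]
    calc ∏ i : Fin n, mgf (Y i) P t
        ≤ ∏ _i : Fin n, Real.exp (t * 0 + t ^ 2 * ((b - μ) - (a - μ)) ^ 2 / 8) := by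
          apply Finset.prod_le_prod
          · exact fun i _ => mgf_nonneg
          · exact fun i _ => hoeff_mgf P (hYmeas i) habY (hYbound i) (hYmean i) t
      _ = Real.exp (n * (t ^ 2 * (b - a) ^ 2 / 8)) := by
          rw [Finset.prod_const, ← Real.exp_nat_mul]
          norm_num
  have hint_sum : ∀ t : ℝ, Integrable (fun ω => Real.exp (t * (∑ i, Y i) ω)) P := by
    intro t
    exact hYindep.integrable_exp_mul_sum hYmeas
      (fun i _ => hoeff_integrable P (hYmeas i) (hYbound i) t)
  set t₀ : ℝ := 4 * ε / (b - a) ^ 2 with ht₀_def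
  have ht₀pos : 0 < t₀ := by positivity
  have hval : -t₀ * (n * ε) + n * (t₀ ^ 2 * (b - a) ^ 2 / 8) = -2 * n * ε ^ 2 / (b - a) ^ 2 := by
    rw [ht₀_def]; field_simp; ring
  -- upper tail
  have hup : (P {ω | (n:ℝ) * ε ≤ (∑ i, Y i) ω}).toReal ≤
      Real.exp (-2 * n * ε ^ 2 / (b - a) ^ 2) := by
    calc (P {ω | (n:ℝ) * ε ≤ (∑ i, Y i) ω}).toReal
        ≤ Real.exp (-t₀ * ((n:ℝ) * ε)) * mgf (∑ i, Y i) P t₀ :=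
          measure_ge_le_exp_mul_mgf _ ht₀pos.le (hint_sum t₀)
      _ ≤ Real.exp (-t₀ * ((n:ℝ) * ε)) * Real.exp (n * (t₀ ^ 2 * (b - a) ^ 2 / 8)) :=
          mul_le_mul_of_nonneg_left (hmgf_sum t₀) (Real.exp_pos _).le
      _ = Real.exp (-2 * n * ε ^ 2 / (b - a) ^ 2) := by
          rw [← Real.exp_add, hval]
  -- lower tail
  have hdown : (P {ω | (∑ i, Y i) ω ≤ -((n:ℝ) * ε)}).toReal ≤
      Real.exp (-2 * n * ε ^ 2 / (b - a) ^ 2) := by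
    calc (P {ω | (∑ i, Y i) ω ≤ -((n:ℝ) * ε)}).toReal
        ≤ Real.exp (-(-t₀) * (-((n:ℝ) * ε))) * mgf (∑ i, Y i) P (-t₀) :=
          measure_le_le_exp_mul_mgf _ (by linarith) (hint_sum (-t₀))
      _ ≤ Real.exp (-(-t₀) * (-((n:ℝ) * ε))) * Real.exp (n * ((-t₀) ^ 2 * (b - a) ^ 2 / 8)) :=
          mul_le_mul_of_nonneg_left (hmgf_sum (-t₀)) (Real.exp_pos _).le
      _ = Real.exp (-2 * n * ε ^ 2 / (b - a) ^ 2) := by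
          rw [← Real.exp_add, ← hval]
          ring_nf
  -- set inclusion
  have hsub : {ω | ε ≤ |(1 / n : ℝ) * ∑ i : Fin n, X i ω - μ|} ⊆
      {ω | (n:ℝ) * ε ≤ (∑ i, Y i) ω} ∪ {ω | (∑ i, Y i) ω ≤ -((n:ℝ) * ε)} := by
    intro ω hω
    simp only [Set.mem_setOf_eq] at hω
    have hsum : (∑ i, Y i) ω = (n:ℝ) * ((1 / n : ℝ) * ∑ i : Fin n, X i ω - μ) := by
      simp only [Finset.sum_apply, hY_def, Finset.sum_sub_distrib, Finset.sum_const,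
        Finset.card_univ, Fintype.card_fin, nsmul_eq_mul]
      field_simp
    rcases le_abs.mp hω with h | h
    · left
      show (n:ℝ) * ε ≤ (∑ i, Y i) ω
      rw [hsum]
      exact mul_le_mul_of_nonneg_left h hnpos.le
    · right
      show (∑ i, Y i) ω ≤ -((n:ℝ) * ε)
      rw [hsum]
      have := mul_le_mul_of_nonneg_left h hnpos.le
      linarith
  calc (P {ω | ε ≤ |(1 / n : ℝ) * ∑ i : Fin n, X i ω - μ|}).toReal
      ≤ (P {ω | (n:ℝ) * ε ≤ (∑ i, Y i) ω} + P {ω | (∑ i, Y i) ω ≤ -((n:ℝ) * ε)}).toReal := by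
        refine ENNReal.toReal_mono ?_ ((measure_mono hsub).trans (measure_union_le _ _))
        exact ENNReal.add_ne_top.mpr ⟨measure_ne_top _ _, measure_ne_top _ _⟩
    _ = (P {ω | (n:ℝ) * ε ≤ (∑ i, Y i) ω}).toReal
        + (P {ω | (∑ i, Y i) ω ≤ -((n:ℝ) * ε)}).toReal :=
        ENNReal.toReal_add (measure_ne_top _ _) (measure_ne_top _ _)
    _ ≤ 2 * Real.exp (-2 * n * ε ^ 2 / (b - a) ^ 2) := by linarith
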